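/- arXiv:1207.3762 — 2 statements merged into one kernel-verified Lean document; each statement's English description precedes it below -/
import Mathlib

section
/- Under the fiber bunching hypothesis, for points y ∈ W^s_loc(x) the sequence H^n_{x,y} = A^n(y)^{-1} A^n(x) satisfies ‖H^{n+1}_{x,y} − H^n_{x,y}‖ ≤ C·C₂·τ^n·d(x,y)^η for constants C, C₂ > 0 and τ ∈ (0,1), hence (H^n_{x,y})_n is a Cauchy sequence converging uniformly in (x,y). -/
open Finset Filter

/-- The sequence `H^n_{x,y} = A^n(y)^{-1} A^n(x)` satisfies the Cauchy estimate
`‖H^{n+1} - H^n‖ ≤ C C₂ τ^n d(x,y)^η`, hence converges uniformly on stable pairs. -/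
theorem stmt3 {N : Type*} [MetricSpace N] {d : ℕ}
    (f : N → N) (Ws : N → Set N) (θ : N → ℝ) (η τ C C₂ : ℝ)
    (A Ainv : N → (EuclideanSpace ℂ (Fin d) →L[ℂ] EuclideanSpace ℂ (Fin d)))
    (An Bn : ℕ → N → (EuclideanSpace ℂ (Fin d) →L[ℂ] EuclideanSpace ℂ (Fin d)))
    (H : ℕ → N → N → (EuclideanSpace ℂ (Fin d) →L[ℂ] EuclideanSpace ℂ (Fin d)))
    (hθpos : ∀ x, 0 < θ x)
    (hη : 0 < η) (hτ : 0 < τ) (hτ1 : τ < 1) (hC : 0 < C) (hC₂ : 0 < C₂)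
    (hinv : ∀ x, A x * Ainv x = 1) (hinv' : ∀ x, Ainv x * A x = 1)
    (hAn0 : ∀ x, An 0 x = 1)
    (hAnrec : ∀ n x, An (n + 1) x = A (f^[n] x) * An n x)
    (hBn0 : ∀ x, Bn 0 x = 1)
    (hBnrec : ∀ n x, Bn (n + 1) x = Bn n x * Ainv (f^[n] x))
    (hHdef : ∀ n x y, H n x y = Bn n y * An n x)
    (hWsRefl : ∀ x, x ∈ Ws x)
    (hWsSymm : ∀ x y, y ∈ Ws x → x ∈ Ws y)
    (hWsf : ∀ x y, y ∈ Ws x → f y ∈ Ws (f x))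
    (hWsBdd : ∀ x y, y ∈ Ws x → dist x y ≤ 1)
    (hcontr : ∀ x, ∀ y ∈ Ws x, ∀ z ∈ Ws x, dist (f y) (f z) ≤ θ x * dist y z)
    (hLem : ∀ x, ∀ y ∈ Ws x, ∀ z ∈ Ws x, ∀ n : ℕ,
      ‖An n y‖ * ‖Bn n z‖ * (∏ i ∈ Finset.range n, θ (f^[i] x)) ^ η ≤ C * τ ^ n)
    (hHol : ∀ u, ∀ v ∈ Ws u, ‖Ainv u * A v - 1‖ ≤ C₂ * dist u v ^ η) :
    (∀ x, ∀ y ∈ Ws x, ∀ n : ℕ,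
        ‖H (n + 1) x y - H n x y‖ ≤ C * C₂ * τ ^ n * dist x y ^ η) ∧
      ∃ Hs : N → N → (EuclideanSpace ℂ (Fin d) →L[ℂ] EuclideanSpace ℂ (Fin d)),
        ∀ ε > 0, ∃ n₀ : ℕ, ∀ n ≥ n₀, ∀ x, ∀ y ∈ Ws x,
          ‖H n x y - Hs x y‖ ≤ ε := by
  have hτ0 : (0:ℝ) < 1 - τ := by linarith
  -- Part 1: the key estimate
  have key : ∀ x, ∀ y ∈ Ws x, ∀ n : ℕ,
      ‖H (n + 1) x y - H n x y‖ ≤ C * C₂ * τ ^ n * dist x y ^ η := by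
    intro x y hy n
    -- iterated stable membership
    have hWs_iter : ∀ m : ℕ, f^[m] y ∈ Ws (f^[m] x) := by
      intro m; induction m with
      | zero => simpa using hy
      | succ m ih =>
        rw [Function.iterate_succ_apply', Function.iterate_succ_apply']
        exact hWsf _ _ ih
    -- distance contraction
    have hdist : ∀ m : ℕ,
        dist (f^[m] x) (f^[m] y) ≤ (∏ i ∈ Finset.range m, θ (f^[i] x)) * dist x y := by
      intro m; induction m with
      | zero => simp
      | succ m ih =>
        rw [Function.iterate_succ_apply', Function.iterate_succ_apply',
          Finset.prod_range_succ]
        calc dist (f (f^[m] x)) (f (f^[m] y))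
            ≤ θ (f^[m] x) * dist (f^[m] x) (f^[m] y) :=
              hcontr _ _ (hWsRefl _) _ (hWs_iter m)
          _ ≤ θ (f^[m] x) * ((∏ i ∈ Finset.range m, θ (f^[i] x)) * dist x y) := by
              exact mul_le_mul_of_nonneg_left ih (hθpos _).le
          _ = (∏ i ∈ Finset.range m, θ (f^[i] x)) * θ (f^[m] x) * dist x y := by ring
    set E := Ainv (f^[n] y) * A (f^[n] x) with hE
    have hid : H (n + 1) x y - H n x y = Bn n y * ((E - 1) * An n x) := by
      rw [hHdef, hHdef, hAnrec, hBnrec, hE]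
      simp only [mul_sub, sub_mul, one_mul, mul_assoc]
    set P := ∏ i ∈ Finset.range n, θ (f^[i] x) with hP
    have hPpos : 0 < P := Finset.prod_pos fun i _ => hθpos _
    have hEest : ‖E - 1‖ ≤ C₂ * (P ^ η * dist x y ^ η) := by
      calc ‖E - 1‖ ≤ C₂ * dist (f^[n] y) (f^[n] x) ^ η :=
            hHol _ _ (hWsSymm _ _ (hWs_iter n))
        _ ≤ C₂ * (P * dist x y) ^ η := by
            apply mul_le_mul_of_nonneg_left _ hC₂.le
            apply Real.rpow_le_rpow dist_nonneg _ hη.le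
            rw [dist_comm]; exact hdist n
        _ = C₂ * (P ^ η * dist x y ^ η) := by
            rw [Real.mul_rpow hPpos.le dist_nonneg]
    have hmain : ‖An n x‖ * ‖Bn n y‖ * P ^ η ≤ C * τ ^ n :=
      hLem x x (hWsRefl x) y hy n
    calc ‖H (n + 1) x y - H n x y‖
        = ‖Bn n y * ((E - 1) * An n x)‖ := by rw [hid]
      _ ≤ ‖Bn n y‖ * (‖E - 1‖ * ‖An n x‖) :=
          (norm_mul_le _ _).trans (by
            exact mul_le_mul_of_nonneg_left (norm_mul_le _ _) (norm_nonneg _))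
      _ ≤ ‖Bn n y‖ * ((C₂ * (P ^ η * dist x y ^ η)) * ‖An n x‖) := by
          apply mul_le_mul_of_nonneg_left _ (norm_nonneg _)
          exact mul_le_mul_of_nonneg_right hEest (norm_nonneg _)
      _ = C₂ * (‖An n x‖ * ‖Bn n y‖ * P ^ η) * dist x y ^ η := by ring
      _ ≤ C₂ * (C * τ ^ n) * dist x y ^ η := by
          apply mul_le_mul_of_nonneg_right _ (Real.rpow_nonneg dist_nonneg _)
          exact mul_le_mul_of_nonneg_left hmain hC₂.le
      _ = C * C₂ * τ ^ n * dist x y ^ η := by ring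
  refine ⟨key, ?_⟩
  -- Part 2 : uniform convergence
  set K := C * C₂ / (1 - τ) with hK
  have hKpos : 0 < K := by positivity
  -- step bound independent of x, y
  have step : ∀ x, ∀ y ∈ Ws x, ∀ n : ℕ,
      dist (H n x y) (H (n + 1) x y) ≤ C * C₂ * τ ^ n := by
    intro x y hy n
    rw [dist_eq_norm, norm_sub_rev]
    calc ‖H (n + 1) x y - H n x y‖ ≤ C * C₂ * τ ^ n * dist x y ^ η := key x y hy n
      _ ≤ C * C₂ * τ ^ n * 1 := by
          apply mul_le_mul_of_nonneg_left _ (by positivity)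
          exact Real.rpow_le_one dist_nonneg (hWsBdd x y hy) hη.le
      _ = C * C₂ * τ ^ n := by ring
  -- tail bound
  have tail : ∀ x, ∀ y ∈ Ws x, ∀ n m : ℕ, n ≤ m →
      dist (H n x y) (H m x y) ≤ K * τ ^ n := by
    intro x y hy n m hnm
    calc dist (H n x y) (H m x y)
        ≤ ∑ i ∈ Finset.Ico n m, C * C₂ * τ ^ i :=
          dist_le_Ico_sum_of_dist_le hnm (fun {k} _ _ => step x y hy k)
      _ = C * C₂ * ∑ i ∈ Finset.Ico n m, τ ^ i := by rw [Finset.mul_sum]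
      _ ≤ K * τ ^ n := by
          have heq : (τ ^ m - τ ^ n) / (τ - 1) = (τ ^ n - τ ^ m) / (1 - τ) := by
            rw [div_eq_div_iff (by linarith) (by linarith)]; ring
          rw [geom_sum_Ico (by linarith : τ ≠ 1) hnm, heq, hK,
            div_mul_eq_mul_div, ← mul_div_assoc]
          gcongr
          linarith [pow_nonneg hτ.le m]
  -- Cauchy sequences converge
  have hcau : ∀ x, ∀ y ∈ Ws x, CauchySeq (fun n => H n x y) := by
    intro x y hy
    exact cauchySeq_of_le_geometric τ (C * C₂) hτ1 (step x y hy)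
  refine ⟨fun x y => limUnder atTop (fun n => H n x y), ?_⟩
  intro ε hε
  have hlim : Tendsto (fun n => K * τ ^ n) atTop (nhds 0) := by
    simpa using (tendsto_pow_atTop_nhds_zero_of_lt_one hτ.le hτ1).const_mul K
  obtain ⟨n₀, hn₀⟩ := (hlim.eventually (eventually_le_nhds hε)).exists
  refine ⟨n₀, fun n hn x y hy => ?_⟩
  have htend := (hcau x y hy).tendsto_limUnder
  have hle : dist (H n x y) (limUnder atTop (fun n => H n x y)) ≤ K * τ ^ n := by
    apply le_of_tendsto (f := fun m => dist (H n x y) (H m x y))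
      (tendsto_const_nhds.dist htend)
    filter_upwards [eventually_ge_atTop n] with m hm
    exact tail x y hy n m hm
  rw [← dist_eq_norm]
  calc dist (H n x y) (limUnder atTop (fun n => H n x y)) ≤ K * τ ^ n := hle
    _ ≤ K * τ ^ n₀ := by
        apply mul_le_mul_of_nonneg_left _ hKpos.le
        exact pow_le_pow_of_le_one hτ.le hτ1.le hn
    _ ≤ ε := hn₀
end

section
/- Under fiber bunching, the i-th term of the series defining ∂_B H^s_{B,x,y}(Ḃ), namely B^i(y)^{-1}[H^s_{f^i(x),f^i(y)} B(f^i(x))^{-1} Ḃ(f^i(x)) − B(f^i(y))^{-1} Ḃ(f^i(y)) H^s_{f^i(x),f^i(y)}] B^i(x), has norm bounded by C₄ τ^i d(x,y)^η ‖Ḃ‖_{0,η} for a uniform constant C₄; hence the series converges absolutely and uniformly, with total norm at most C₄ d(x,y)^η ‖Ḃ‖_{0,η}/(1−τ). -/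
open Finset

/-- Each term of the series defining `∂_B H^s_{B,x,y}(Ḃ)` is bounded by
`C₄ τ^i d(x,y)^η ‖Ḃ‖_{0,η}`; hence the series converges absolutely with total norm
at most `C₄ d(x,y)^η ‖Ḃ‖_{0,η} / (1 − τ)`. -/
theorem stmt19 {N : Type*} [MetricSpace N] {d : ℕ}
    (f : N → N) (Ws : N → Set N) (θ : N → ℝ) (η τ C Cbar KB KBdot : ℝ)
    (B Binv Bdot : N → (EuclideanSpace ℂ (Fin d) →L[ℂ] EuclideanSpace ℂ (Fin d)))
    (Bn Bninv : ℕ → N → (EuclideanSpace ℂ (Fin d) →L[ℂ] EuclideanSpace ℂ (Fin d)))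
    (Hs : N → N → (EuclideanSpace ℂ (Fin d) →L[ℂ] EuclideanSpace ℂ (Fin d)))
    (hη : 0 < η) (hτ : 0 < τ) (hτ1 : τ < 1) (hC : 0 < C) (hCbar : 0 < Cbar)
    (hKB : 0 < KB) (hKBdot : 0 < KBdot) (hθ : ∀ x, 0 < θ x)
    (hWsf : ∀ x y, y ∈ Ws x → f y ∈ Ws (f x))
    (hWsBdd : ∀ x y, y ∈ Ws x → dist x y ≤ 1)
    (hinv : ∀ x, B x * Binv x = 1) (hinv' : ∀ x, Binv x * B x = 1)
    (hBn0 : ∀ x, Bn 0 x = 1)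
    (hBnrec : ∀ n x, Bn (n + 1) x = B (f^[n] x) * Bn n x)
    (hBninv0 : ∀ x, Bninv 0 x = 1)
    (hBninvrec : ∀ n x, Bninv (n + 1) x = Bninv n x * Binv (f^[n] x))
    (hcontr : ∀ x, ∀ y ∈ Ws x, ∀ i : ℕ,
      dist (f^[i] x) (f^[i] y) ≤ (∏ k ∈ Finset.range i, θ (f^[k] x)) * dist x y)
    (hbunch : ∀ x, ∀ y ∈ Ws x, ∀ i : ℕ,
      ‖Bninv i y‖ * ‖Bn i x‖ * (∏ k ∈ Finset.range i, θ (f^[k] x)) ^ η ≤ C * τ ^ i)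
    (hHsnear : ∀ x, ∀ y ∈ Ws x, ‖Hs x y - 1‖ ≤ Cbar * dist x y ^ η)
    (hBinvHol : ∀ x y, ‖Binv x - Binv y‖ ≤ KB * dist x y ^ η)
    (hBinvBd : ∀ x, ‖Binv x‖ ≤ KB)
    (hBdotHol : ∀ x y, ‖Bdot x - Bdot y‖ ≤ KBdot * dist x y ^ η)
    (hBdotBd : ∀ x, ‖Bdot x‖ ≤ KBdot) :
    ∃ C₄ > 0, ∀ x, ∀ y ∈ Ws x,
      ∀ T : ℕ → (EuclideanSpace ℂ (Fin d) →L[ℂ] EuclideanSpace ℂ (Fin d)),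
        (∀ i, T i =
          Bninv i y *
            (Hs (f^[i] x) (f^[i] y) * Binv (f^[i] x) * Bdot (f^[i] x) -
              Binv (f^[i] y) * Bdot (f^[i] y) * Hs (f^[i] x) (f^[i] y)) *
            Bn i x) →
        (∀ i, ‖T i‖ ≤ C₄ * τ ^ i * dist x y ^ η * KBdot) ∧
        Summable (fun i => ‖T i‖) ∧
        ∑' i, ‖T i‖ ≤ C₄ * dist x y ^ η * KBdot / (1 - τ) := by
  refine ⟨2 * (Cbar + 1) * KB * C, by positivity, ?_⟩
  intro x y hy T hT
  have hd0 : (0:ℝ) ≤ dist x y ^ η := Real.rpow_nonneg dist_nonneg η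
  have hWsi : ∀ i : ℕ, f^[i] y ∈ Ws (f^[i] x) := by
    intro i
    induction i with
    | zero => simpa using hy
    | succ n ih =>
      simp only [Function.iterate_succ_apply']
      exact hWsf _ _ ih
  have key : ∀ i, ‖T i‖ ≤ 2 * (Cbar + 1) * KB * C * τ ^ i * dist x y ^ η * KBdot := by
    intro i
    set X := f^[i] x
    set Y := f^[i] y
    set H := Hs X Y
    set A := Binv X * Bdot X
    set A' := Binv Y * Bdot Y
    set D : ℝ := dist X Y with hD
    have hD0 : (0:ℝ) ≤ D := dist_nonneg
    have hP0 : (0:ℝ) ≤ ∏ k ∈ Finset.range i, θ (f^[k] x) :=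
      Finset.prod_nonneg fun k _ => (hθ _).le
    have hArw : H * Binv X * Bdot X - Binv Y * Bdot Y * H
        = (H - 1) * A + (A - A') + A' * (1 - H) := by
      simp only [A, A', sub_mul, mul_sub, one_mul, mul_one, mul_assoc]; abel
    have hnA : ‖A‖ ≤ KB * KBdot :=
      le_trans (norm_mul_le _ _) (mul_le_mul (hBinvBd X) (hBdotBd X) (norm_nonneg _) hKB.le)
    have hnA' : ‖A'‖ ≤ KB * KBdot :=
      le_trans (norm_mul_le _ _) (mul_le_mul (hBinvBd Y) (hBdotBd Y) (norm_nonneg _) hKB.le)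
    have hH1 : ‖H - 1‖ ≤ Cbar * D ^ η := hHsnear X Y (hWsi i)
    have hAA' : ‖A - A'‖ ≤ 2 * KB * KBdot * D ^ η := by
      have : A - A' = (Binv X - Binv Y) * Bdot X + Binv Y * (Bdot X - Bdot Y) := by
        simp only [A, A', sub_mul, mul_sub, one_mul, mul_one, mul_assoc]; abel
      rw [this]
      calc ‖(Binv X - Binv Y) * Bdot X + Binv Y * (Bdot X - Bdot Y)‖
          ≤ ‖(Binv X - Binv Y) * Bdot X‖ + ‖Binv Y * (Bdot X - Bdot Y)‖ := norm_add_le _ _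
        _ ≤ ‖Binv X - Binv Y‖ * ‖Bdot X‖ + ‖Binv Y‖ * ‖Bdot X - Bdot Y‖ :=
            add_le_add (norm_mul_le _ _) (norm_mul_le _ _)
        _ ≤ (KB * D ^ η) * KBdot + KB * (KBdot * D ^ η) :=
            add_le_add
              (mul_le_mul (hBinvHol X Y) (hBdotBd X) (norm_nonneg _) (by positivity))
              (mul_le_mul (hBinvBd Y) (hBdotHol X Y) (norm_nonneg _) hKB.le)
        _ = 2 * KB * KBdot * D ^ η := by ring
    have hDη : (0:ℝ) ≤ D ^ η := Real.rpow_nonneg hD0 η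
    have hM : ‖H * Binv X * Bdot X - Binv Y * Bdot Y * H‖
        ≤ 2 * (Cbar + 1) * KB * KBdot * D ^ η := by
      rw [hArw]
      calc ‖(H - 1) * A + (A - A') + A' * (1 - H)‖
          ≤ ‖(H - 1) * A‖ + ‖A - A'‖ + ‖A' * (1 - H)‖ := norm_add₃_le
        _ ≤ ‖H - 1‖ * ‖A‖ + ‖A - A'‖ + ‖A'‖ * ‖1 - H‖ :=
            add_le_add (add_le_add (norm_mul_le _ _) le_rfl) (norm_mul_le _ _)
        _ ≤ (Cbar * D ^ η) * (KB * KBdot) + 2 * KB * KBdot * D ^ η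
              + (KB * KBdot) * (Cbar * D ^ η) :=
            add_le_add
              (add_le_add
                (mul_le_mul hH1 hnA (norm_nonneg _) (by positivity)) hAA')
              (mul_le_mul hnA' (by rw [norm_sub_rev]; exact hH1) (norm_nonneg _)
                (by positivity))
        _ = 2 * (Cbar + 1) * KB * KBdot * D ^ η := by ring
    have hDle : D ^ η ≤ (∏ k ∈ Finset.range i, θ (f^[k] x)) ^ η * dist x y ^ η := by
      rw [← Real.mul_rpow hP0 dist_nonneg]
      exact Real.rpow_le_rpow hD0 (hcontr x y hy i) hη.le
    have hTn : ‖T i‖ ≤ ‖Bninv i y‖ * (2 * (Cbar + 1) * KB * KBdot * D ^ η) * ‖Bn i x‖ := by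
      rw [hT i]
      calc ‖Bninv i y * (H * Binv X * Bdot X - Binv Y * Bdot Y * H) * Bn i x‖
          ≤ ‖Bninv i y * (H * Binv X * Bdot X - Binv Y * Bdot Y * H)‖ * ‖Bn i x‖ :=
            norm_mul_le _ _
        _ ≤ ‖Bninv i y‖ * ‖H * Binv X * Bdot X - Binv Y * Bdot Y * H‖ * ‖Bn i x‖ := by
            gcongr; exact norm_mul_le _ _
        _ ≤ ‖Bninv i y‖ * (2 * (Cbar + 1) * KB * KBdot * D ^ η) * ‖Bn i x‖ := by
            gcongr
    calc ‖T i‖ ≤ ‖Bninv i y‖ * (2 * (Cbar + 1) * KB * KBdot * D ^ η) * ‖Bn i x‖ := hTn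
      _ ≤ ‖Bninv i y‖ * (2 * (Cbar + 1) * KB * KBdot *
            ((∏ k ∈ Finset.range i, θ (f^[k] x)) ^ η * dist x y ^ η)) * ‖Bn i x‖ := by
          gcongr
      _ = 2 * (Cbar + 1) * KB * KBdot * dist x y ^ η *
            (‖Bninv i y‖ * ‖Bn i x‖ * (∏ k ∈ Finset.range i, θ (f^[k] x)) ^ η) := by ring
      _ ≤ 2 * (Cbar + 1) * KB * KBdot * dist x y ^ η * (C * τ ^ i) :=
          mul_le_mul_of_nonneg_left (hbunch x y hy i) (by positivity)
      _ = 2 * (Cbar + 1) * KB * C * τ ^ i * dist x y ^ η * KBdot := by ring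
  refine ⟨key, ?_, ?_⟩
  · have hg : Summable (fun i : ℕ => 2 * (Cbar + 1) * KB * C * τ ^ i * dist x y ^ η * KBdot) := by
      simpa [mul_comm, mul_left_comm, mul_assoc] using
        (((summable_geometric_of_lt_one hτ.le hτ1).mul_left (2 * (Cbar + 1) * KB * C)).mul_right
          (dist x y ^ η * KBdot))
    exact hg.of_nonneg_of_le (fun i => norm_nonneg _) key
  · have hg : Summable (fun i : ℕ => 2 * (Cbar + 1) * KB * C * τ ^ i * dist x y ^ η * KBdot) := by
      simpa [mul_comm, mul_left_comm, mul_assoc] using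
        (((summable_geometric_of_lt_one hτ.le hτ1).mul_left (2 * (Cbar + 1) * KB * C)).mul_right
          (dist x y ^ η * KBdot))
    have hT' : Summable (fun i => ‖T i‖) :=
      hg.of_nonneg_of_le (fun i => norm_nonneg _) key
    calc ∑' i, ‖T i‖
        ≤ ∑' i : ℕ, 2 * (Cbar + 1) * KB * C * τ ^ i * dist x y ^ η * KBdot :=
          Summable.tsum_le_tsum key hT' hg
      _ = 2 * (Cbar + 1) * KB * C * dist x y ^ η * KBdot * ∑' i : ℕ, τ ^ i := by
          rw [← tsum_mul_left]
          congr 1; ext i; ring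
      _ = 2 * (Cbar + 1) * KB * C * dist x y ^ η * KBdot / (1 - τ) := by
          rw [tsum_geometric_of_lt_one hτ.le hτ1]; ring
end
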